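/- If f ∈ e_{-α}C^s(T^n_α) for an integer s ≥ 0, then for all m ∈ Z^n \ {0}, |F_α(f)(m)| ≤ (√n / (2π|csc α|))^s · max_{|β| = s} |F_α[e_{-α} ∂^β(e_α f)](m)| / |m|^s, and consequently |F_α(f)(m)| (1 + |m|^s) → 0 as |m| → ∞. -/

import Mathlib

open MeasureTheory Filter

noncomputable section

/-- The fractional torus, realized as the cube `[-|sin α|/2, |sin α|/2]^n`. -/
def Tor (α : ℝ) (n : ℕ) : Set (Fin n → ℝ) :=
  Set.univ.pi fun _ => Set.Icc (-(|Real.sin α| / 2)) (|Real.sin α| / 2)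

/-- The chirp `e_α(x) = e^{π i |x|² cot α}`. -/
def eA (α : ℝ) {n : ℕ} (x : Fin n → ℝ) : ℂ :=
  Complex.exp (Complex.I * ((Real.pi * (∑ i, x i ^ 2) * (Real.cos α / Real.sin α) : ℝ) : ℂ))

/-- `A_α = √(1 - i cot α)`. -/
def Acoef (α : ℝ) : ℂ := (1 - Complex.I * ((Real.cos α / Real.sin α : ℝ) : ℂ)) ^ (1 / 2 : ℂ)

/-- The kernel `K_α(m,x) = A_α^n e_α(x) e^{-2π i (m·x) csc α} e_α(m)`. -/
def Kk (α : ℝ) {n : ℕ} (m : Fin n → ℤ) (x : Fin n → ℝ) : ℂ :=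
  Acoef α ^ n * eA α x *
    Complex.exp (-(Complex.I * ((2 * Real.pi * (∑ i, (m i : ℝ) * x i) / Real.sin α : ℝ) : ℂ))) *
    eA α fun i => (m i : ℝ)

/-- The `m`-th fractional Fourier coefficient of order `α`. -/
def Fcoef (α : ℝ) {n : ℕ} (f : (Fin n → ℝ) → ℂ) (m : Fin n → ℤ) : ℂ :=
  ∫ x in Tor α n, f x * Kk α m x

/-- `|sin α|`-periodicity in every coordinate. -/
def Per (α : ℝ) {n : ℕ} (f : (Fin n → ℝ) → ℂ) : Prop :=
  ∀ (x : Fin n → ℝ) (k : Fin n → ℤ), f (fun i => x i + k i * |Real.sin α|) = f x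

/-- The iterated partial derivative `∂^β` for a multi-index `β`. -/
def pderivM {n : ℕ} (β : Fin n → ℕ) : ((Fin n → ℝ) → ℂ) → ((Fin n → ℝ) → ℂ) :=
  (List.ofFn fun i : Fin n =>
    (fun g : (Fin n → ℝ) → ℂ => fun x => fderiv ℝ g x (Pi.single i 1))^[β i]).foldr
    (· ∘ ·) id

/-! ### Auxiliary definitions -/

/-- single partial derivative -/
def Dd {n : ℕ} (i : Fin n) (g : (Fin n → ℝ) → ℂ) : (Fin n → ℝ) → ℂ :=
  fun x => fderiv ℝ g x (Pi.single i 1)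

/-- the pure oscillation factor in the kernel -/
def myE (α : ℝ) {n : ℕ} (m : Fin n → ℤ) (x : Fin n → ℝ) : ℂ :=
  Complex.exp (-(Complex.I * ((2 * Real.pi * (∑ i, (m i : ℝ) * x i) / Real.sin α : ℝ) : ℂ)))

/-- the key auxiliary integral -/
def coefI (α : ℝ) {n : ℕ} (m : Fin n → ℤ) (h : (Fin n → ℝ) → ℂ) : ℂ :=
  ∫ x in Tor α n, h x * myE α m x

lemma sin_ne_zero_of (α : ℝ) (hα : ∀ k : ℤ, α ≠ k * Real.pi) : Real.sin α ≠ 0 := by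
  intro h
  rcases Real.sin_eq_zero_iff.1 h with ⟨k, hk⟩
  exact hα k hk.symm

lemma norm_exp_I_mul (r : ℝ) : ‖Complex.exp (Complex.I * (r : ℂ))‖ = 1 := by
  rw [Complex.norm_exp, Complex.mul_re, Complex.I_re, Complex.I_im,
    Complex.ofReal_re, Complex.ofReal_im]
  norm_num

lemma norm_eA (α : ℝ) {n : ℕ} (x : Fin n → ℝ) : ‖eA α x‖ = 1 := norm_exp_I_mul _

lemma eA_ne (α : ℝ) {n : ℕ} (x : Fin n → ℝ) : eA α x ≠ 0 := Complex.exp_ne_zero _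

lemma norm_myE (α : ℝ) {n : ℕ} (m : Fin n → ℤ) (x : Fin n → ℝ) : ‖myE α m x‖ = 1 := by
  rw [myE, Complex.exp_neg, norm_inv, norm_exp_I_mul, inv_one]

lemma continuous_eA (α : ℝ) (n : ℕ) : Continuous (eA α (n := n)) := by
  apply Complex.continuous_exp.comp
  apply Continuous.mul continuous_const
  exact Complex.continuous_ofReal.comp (by fun_prop)

lemma continuous_myE (α : ℝ) {n : ℕ} (m : Fin n → ℤ) : Continuous (myE α m) := by
  apply Complex.continuous_exp.comp
  apply Continuous.neg
  apply Continuous.mul continuous_const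
  exact Complex.continuous_ofReal.comp (by fun_prop)

lemma Tor_eq_Icc (α : ℝ) (n : ℕ) :
    Tor α n = Set.Icc (fun _ => -(|Real.sin α| / 2)) (fun _ => |Real.sin α| / 2) := by
  rw [Tor, Set.pi_univ_Icc]

lemma Fcoef_eq (α : ℝ) {n : ℕ} (f : (Fin n → ℝ) → ℂ) (m : Fin n → ℤ) :
    Fcoef α f m = Acoef α ^ n * eA α (fun i => (m i : ℝ)) *
      coefI α m (fun x => eA α x * f x) := by
  rw [Fcoef, coefI, ← MeasureTheory.integral_const_mul]
  congr 1
  ext x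
  rw [Kk, myE]
  ring

lemma Fcoef_eq' (α : ℝ) {n : ℕ} (h : (Fin n → ℝ) → ℂ) (m : Fin n → ℤ) :
    Fcoef α (fun x => (eA α x)⁻¹ * h x) m =
      Acoef α ^ n * eA α (fun i => (m i : ℝ)) * coefI α m h := by
  rw [Fcoef, coefI, ← MeasureTheory.integral_const_mul]
  congr 1
  ext x
  rw [Kk, myE]
  have h1 : (eA α x)⁻¹ * eA α x = 1 := inv_mul_cancel₀ (eA_ne α x)
  have h2 : (eA α x)⁻¹ * h x *
      (Acoef α ^ n * eA α x *
        Complex.exp (-(Complex.I * ((2 * Real.pi * (∑ i, (m i : ℝ) * x i) / Real.sin α : ℝ) : ℂ))) *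
        eA α fun i => (m i : ℝ)) =
      ((eA α x)⁻¹ * eA α x) * (Acoef α ^ n * (eA α fun i => (m i : ℝ)) *
        (h x * Complex.exp (-(Complex.I * ((2 * Real.pi * (∑ i, (m i : ℝ) * x i) / Real.sin α : ℝ) : ℂ))))) := by
    ring
  rw [h2, h1, one_mul]

lemma norm_Fcoef (α : ℝ) {n : ℕ} (f : (Fin n → ℝ) → ℂ) (m : Fin n → ℤ) :
    ‖Fcoef α f m‖ = ‖Acoef α‖ ^ n * ‖coefI α m (fun x => eA α x * f x)‖ := by
  rw [Fcoef_eq, norm_mul, norm_mul, norm_eA, norm_pow, mul_one]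

lemma norm_Fcoef' (α : ℝ) {n : ℕ} (h : (Fin n → ℝ) → ℂ) (m : Fin n → ℤ) :
    ‖Fcoef α (fun x => (eA α x)⁻¹ * h x) m‖ = ‖Acoef α‖ ^ n * ‖coefI α m h‖ := by
  rw [Fcoef_eq', norm_mul, norm_mul, norm_eA, norm_pow, mul_one]

/-- the linear phase functional -/
def Lm (α : ℝ) {n : ℕ} (m : Fin n → ℤ) : (Fin n → ℝ) →L[ℝ] ℂ :=
  ∑ j, (-(Complex.I * (2 * Real.pi / Real.sin α)) * (m j : ℂ)) •
    (Complex.ofRealCLM.comp (ContinuousLinearMap.proj j))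

lemma Lm_apply (α : ℝ) {n : ℕ} (m : Fin n → ℤ) (v : Fin n → ℝ) :
    Lm α m v = -(Complex.I * ((2 * Real.pi * (∑ i, (m i : ℝ) * v i) / Real.sin α : ℝ) : ℂ)) := by
  simp only [Lm, ContinuousLinearMap.sum_apply, ContinuousLinearMap.smul_apply,
    ContinuousLinearMap.comp_apply, ContinuousLinearMap.proj_apply, Complex.ofRealCLM_apply,
    smul_eq_mul]
  push_cast
  rw [Finset.mul_sum, Finset.sum_div, Finset.mul_sum, ← Finset.sum_neg_distrib]
  exact Finset.sum_congr rfl fun i _ => by ring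

lemma Lm_single (α : ℝ) {n : ℕ} (m : Fin n → ℤ) (i : Fin n) :
    Lm α m (Pi.single i 1) = -(Complex.I * (2 * Real.pi / Real.sin α)) * (m i : ℂ) := by
  simp only [Lm, ContinuousLinearMap.sum_apply, ContinuousLinearMap.smul_apply,
    ContinuousLinearMap.comp_apply, ContinuousLinearMap.proj_apply, Complex.ofRealCLM_apply,
    smul_eq_mul, Pi.single_apply]
  rw [Finset.sum_eq_single i]
  · simp
  · intro b _ hb; simp [hb]
  · simp

lemma myE_eq_exp_Lm (α : ℝ) {n : ℕ} (m : Fin n → ℤ) :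
    myE α m = fun x => Complex.exp (Lm α m x) := by
  funext x; rw [myE, Lm_apply]

lemma hasFDerivAt_myE (α : ℝ) {n : ℕ} (m : Fin n → ℤ) (x : Fin n → ℝ) :
    HasFDerivAt (myE α m) (myE α m x • Lm α m) x := by
  rw [myE_eq_exp_Lm]
  exact (Complex.hasDerivAt_exp (Lm α m x)).comp_hasFDerivAt x (Lm α m).hasFDerivAt

lemma per_myE (α : ℝ) (hs : Real.sin α ≠ 0) {n : ℕ} (m : Fin n → ℤ) : Per α (myE α m) := by
  intro x k
  obtain ⟨e, he⟩ : ∃ e : ℤ, (e : ℝ) = |Real.sin α| / Real.sin α := by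
    rcases abs_choice (Real.sin α) with h | h
    · exact ⟨1, by rw [h]; field_simp; norm_num⟩
    · exact ⟨-1, by rw [h]; push_cast; field_simp⟩
  rw [myE, myE]
  have hsum : ∑ i, (m i : ℝ) * (x i + k i * |Real.sin α|)
      = ∑ i, (m i : ℝ) * x i + (∑ i, (m i : ℝ) * k i) * |Real.sin α| := by
    rw [Finset.sum_mul]
    rw [← Finset.sum_add_distrib]
    exact Finset.sum_congr rfl fun i _ => by ring
  have harg : (2 * Real.pi * (∑ i, (m i : ℝ) * (x i + k i * |Real.sin α|)) / Real.sin α : ℝ)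
      = 2 * Real.pi * (∑ i, (m i : ℝ) * x i) / Real.sin α
        + 2 * Real.pi * ((∑ i, (m i : ℝ) * k i) * (e : ℝ)) := by
    rw [hsum, he]
    field_simp
  rw [harg]
  push_cast
  rw [show -(Complex.I * (2 * (Real.pi:ℂ) * (∑ i, (m i : ℂ) * (x i : ℂ)) / Complex.sin ((α:ℝ):ℂ)
        + 2 * (Real.pi:ℂ) * ((∑ i, (m i : ℂ) * (k i : ℂ)) * (e : ℂ))))
      = -(Complex.I * (2 * (Real.pi:ℂ) * (∑ i, (m i : ℂ) * (x i : ℂ)) / Complex.sin ((α:ℝ):ℂ)))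
        + ((-(∑ i, m i * k i) * e : ℤ) : ℂ) * (2 * (Real.pi : ℂ) * Complex.I) from by
    push_cast; ring]
  rw [Complex.exp_add, Complex.exp_int_mul_two_pi_mul_I, mul_one]

lemma per_mul (α : ℝ) {n : ℕ} {h h' : (Fin n → ℝ) → ℂ} (H : Per α h) (H' : Per α h') :
    Per α fun x => h x * h' x := fun x k => by
  show h _ * h' _ = h x * h' x
  rw [H x k, H' x k]

lemma per_Dd (α : ℝ) {n : ℕ} {h : (Fin n → ℝ) → ℂ} (hd : Differentiable ℝ h) (hp : Per α h)
    (i : Fin n) : Per α (Dd i h) := by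
  intro x k
  set v : Fin n → ℝ := fun t => (k t : ℝ) * |Real.sin α| with hv
  have hxv : (fun t => x t + (k t : ℝ) * |Real.sin α|) = x + v := rfl
  have hcomp : (fun y : Fin n → ℝ => h (y + v)) = h := by
    funext y
    exact hp y k
  have h1 : HasFDerivAt (fun y : Fin n → ℝ => h (y + v)) (fderiv ℝ h (x + v)) x := by
    have := ((hd (x + v)).hasFDerivAt).comp x ((hasFDerivAt_id x).add_const v)
    exact this
  have h2 : fderiv ℝ h (x + v) = fderiv ℝ h x := by
    rw [hcomp] at h1
    exact h1.fderiv.symm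
  rw [Dd, Dd, hxv, h2]

lemma Dd_contDiff {n : ℕ} {h : (Fin n → ℝ) → ℂ} {k : ℕ} (hf : ContDiff ℝ ((k+1 : ℕ) : ℕ∞) h)
    (i : Fin n) : ContDiff ℝ ((k : ℕ) : ℕ∞) (Dd i h) := by
  have h1 : ContDiff ℝ ((k : ℕ) : ℕ∞) (fderiv ℝ h) := by
    apply hf.fderiv_right
    norm_cast
  exact h1.clm_apply contDiff_const

lemma Dd_cont {n : ℕ} {h : (Fin n → ℝ) → ℂ} (hf : ContDiff ℝ ((1:ℕ) : ℕ∞) h) (i : Fin n) :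
    Continuous (Dd i h) :=
  (Dd_contDiff (k := 0) (by exact_mod_cast hf) i).continuous

lemma parts (α : ℝ) (hs : Real.sin α ≠ 0) {N : ℕ} (m : Fin (N+1) → ℤ)
    (h : (Fin (N+1) → ℝ) → ℂ) (hC : ContDiff ℝ ((1:ℕ):ℕ∞) h) (hP : Per α h) (i : Fin (N+1)) :
    coefI α m (Dd i h) = (Complex.I * (2 * Real.pi / Real.sin α) * (m i : ℂ)) * coefI α m h := by
  classical
  set L : ℝ := |Real.sin α| with hL
  have hL0 : 0 ≤ L := abs_nonneg _
  set a : Fin (N+1) → ℝ := fun _ => -(L/2) with ha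
  set b : Fin (N+1) → ℝ := fun _ => L/2 with hb
  have hle : a ≤ b := fun j => by simp [ha, hb]; linarith
  set φ : (Fin (N+1) → ℝ) → ℂ := fun x => h x * myE α m x with hφ
  have hφc : Continuous φ := (hC.continuous).mul (continuous_myE α m)
  have hφper : Per α φ := per_mul α hP (per_myE α hs m)
  have hdh : Differentiable ℝ h := hC.differentiable (by simp)
  set κ : ℂ := -(Complex.I * (2 * Real.pi / Real.sin α)) with hκ
  set F : (Fin (N+1) → ℝ) → (Fin (N+1) → ℂ) := fun x => Pi.single i (φ x) with hF
  set Φ' : (Fin (N+1) → ℝ) → ((Fin (N+1) → ℝ) →L[ℝ] ℂ) := fun x =>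
    h x • (myE α m x • Lm α m) + myE α m x • fderiv ℝ h x with hΦ'
  set F' : (Fin (N+1) → ℝ) → ((Fin (N+1) → ℝ) →L[ℝ] (Fin (N+1) → ℂ)) := fun x =>
    ContinuousLinearMap.pi (fun j => if j = i then Φ' x else 0) with hF'
  have hder : ∀ x, HasFDerivAt F (F' x) x := by
    intro x
    apply hasFDerivAt_pi''
    intro j
    have hproj : (ContinuousLinearMap.proj j).comp (F' x) = if j = i then Φ' x else 0 :=
      ContinuousLinearMap.proj_pi _ j
    rw [hproj]
    rcases eq_or_ne j i with rfl | hj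
    · simp only [if_pos rfl]
      have : (fun x => F x j) = φ := by
        funext y; simp [hF, Pi.single_eq_same]
      rw [this]
      exact ((hdh x).hasFDerivAt).mul (hasFDerivAt_myE α m x)
    · simp only [if_neg hj]
      have : (fun x => F x j) = fun _ => (0:ℂ) := by
        funext y; simp [hF, Pi.single_eq_of_ne hj]
      rw [this]
      exact hasFDerivAt_const 0 x
  have hdiv : ∀ x, (∑ j, F' x (Pi.single j 1) j) = Dd i h x * myE α m x + (κ * m i) * φ x := by
    intro x
    rw [Finset.sum_eq_single i]
    · simp only [hF', ContinuousLinearMap.pi_apply, if_pos rfl, if_true]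
      simp only [hΦ', ContinuousLinearMap.add_apply, ContinuousLinearMap.smul_apply,
        smul_eq_mul, Lm_single]
      rw [hφ]
      simp only [Dd, hκ]
      ring
    · intro j _ hj
      simp [hF', ContinuousLinearMap.pi_apply, if_neg hj]
    · simp
  have hcont : ContinuousOn F (Set.Icc a b) := by
    apply Continuous.continuousOn
    apply continuous_pi
    intro j
    rcases eq_or_ne j i with rfl | hj
    · simpa [hF, Pi.single_eq_same] using hφc
    · have : (fun x : Fin (N+1) → ℝ => F x j) = fun _ => (0:ℂ) := by
        funext y; simp [hF, Pi.single_eq_of_ne hj]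
      rw [this]; exact continuous_const
  have hDc : Continuous (Dd i h) := Dd_cont hC i
  have hIdiv : IntegrableOn (fun x => ∑ j, F' x (Pi.single j 1) j) (Set.Icc a b) volume := by
    apply ContinuousOn.integrableOn_compact isCompact_Icc
    apply Continuous.continuousOn
    have : Continuous fun x => Dd i h x * myE α m x + (κ * m i) * φ x := by
      exact (hDc.mul (continuous_myE α m)).add (continuous_const.mul hφc)
    exact this.congr (fun x => (hdiv x).symm)
  have hmain := MeasureTheory.integral_divergence_of_hasFDerivAt_off_countable a b hle F F'
    ∅ Set.countable_empty hcont (fun x _ => hder x) hIdiv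
  have hbd : ∑ j : Fin (N+1),
      ((∫ (x : Fin N → ℝ) in Set.Icc (a ∘ j.succAbove) (b ∘ j.succAbove), F (j.insertNth (b j) x) j) -
        ∫ (x : Fin N → ℝ) in Set.Icc (a ∘ j.succAbove) (b ∘ j.succAbove), F (j.insertNth (a j) x) j) = 0 := by
    apply Finset.sum_eq_zero
    intro j _
    rcases eq_or_ne j i with rfl | hj
    · have key : ∀ y : Fin N → ℝ, F (j.insertNth (b j) y) j = F (j.insertNth (a j) y) j := by
        intro y
        have harg : ∀ t, (j.insertNth (b j) y : Fin (N+1) → ℝ) t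
            = (j.insertNth (a j) y : Fin (N+1) → ℝ) t +
              ((Pi.single j 1 : Fin (N+1) → ℤ) t : ℝ) * |Real.sin α| := by
          rw [Fin.forall_iff_succAbove j]
          constructor
          · simp only [Fin.insertNth_apply_same, Pi.single_eq_same, ha, hb, hL]
            push_cast
            ring
          · intro t
            simp [Fin.insertNth_apply_succAbove, Pi.single_eq_of_ne (Fin.succAbove_ne j t)]
        have h2 : (j.insertNth (b j) y : Fin (N+1) → ℝ) = fun t =>
            (j.insertNth (a j) y : Fin (N+1) → ℝ) t +
              ((Pi.single j 1 : Fin (N+1) → ℤ) t : ℝ) * |Real.sin α| := funext harg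
        simp only [hF, Pi.single_eq_same]
        rw [h2, hφper _ (Pi.single j 1)]
      rw [setIntegral_congr_fun measurableSet_Icc (fun y _ => key y), sub_self]
    · have z1 : ∀ y : Fin N → ℝ, F (j.insertNth (b j) y) j = 0 := fun y => by
        simp [hF, Pi.single_eq_of_ne hj]
      have z2 : ∀ y : Fin N → ℝ, F (j.insertNth (a j) y) j = 0 := fun y => by
        simp [hF, Pi.single_eq_of_ne hj]
      rw [setIntegral_congr_fun measurableSet_Icc (fun y _ => z1 y),
        setIntegral_congr_fun measurableSet_Icc (fun y _ => z2 y)]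
      simp
  rw [hbd] at hmain
  have hsplit : ∫ x in Set.Icc a b, ∑ j, F' x (Pi.single j 1) j
      = (∫ x in Set.Icc a b, Dd i h x * myE α m x) + (κ * m i) * ∫ x in Set.Icc a b, φ x := by
    rw [setIntegral_congr_fun measurableSet_Icc (fun x _ => hdiv x)]
    rw [MeasureTheory.integral_add, MeasureTheory.integral_const_mul]
    · exact (ContinuousOn.integrableOn_compact isCompact_Icc
        ((hDc.mul (continuous_myE α m)).continuousOn))
    · exact (ContinuousOn.integrableOn_compact isCompact_Icc
        ((continuous_const.mul hφc).continuousOn))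
  rw [hsplit] at hmain
  have hTor : Tor α (N+1) = Set.Icc a b := Tor_eq_Icc α (N+1)
  rw [coefI, coefI, hTor]
  have h0 : (∫ x in Set.Icc a b, Dd i h x * myE α m x) = -((κ * m i) * ∫ x in Set.Icc a b, φ x) :=
    eq_neg_of_add_eq_zero_left hmain
  rw [h0, hκ]
  have h3 : (∫ x in Set.Icc a b, h x * myE α m x) = ∫ x in Set.Icc a b, φ x := rfl
  rw [h3]
  ring

lemma coefI_iter (α : ℝ) (hs : Real.sin α ≠ 0) {N : ℕ} (m : Fin (N+1) → ℤ) (i : Fin (N+1)) :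
    ∀ (k : ℕ) (h : (Fin (N+1) → ℝ) → ℂ), ContDiff ℝ ((k:ℕ):ℕ∞) h → Per α h →
      coefI α m ((Dd i)^[k] h)
        = (Complex.I * (2 * Real.pi / Real.sin α) * (m i : ℂ))^k * coefI α m h := by
  intro k
  induction k with
  | zero => intro h _ _; simp
  | succ k IH =>
    intro h hC hP
    have hd : Differentiable ℝ h := hC.differentiable (by simp)
    have hC1 : ContDiff ℝ ((1:ℕ):ℕ∞) h := hC.of_le (by exact_mod_cast Nat.succ_le_succ (Nat.zero_le k))
    have hCd : ContDiff ℝ ((k:ℕ):ℕ∞) (Dd i h) := Dd_contDiff hC i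
    have hPd : Per α (Dd i h) := per_Dd α hd hP i
    rw [Function.iterate_succ_apply, IH (Dd i h) hCd hPd, parts α hs m h hC1 hP i, pow_succ]
    ring

lemma foldr_aux {n : ℕ} (i : Fin n) (s : ℕ) :
    ∀ l : List (Fin n), l.Nodup →
      ((l.map fun j => (fun g : (Fin n → ℝ) → ℂ =>
          fun x => fderiv ℝ g x (Pi.single j 1))^[(Pi.single i s : Fin n → ℕ) j]).foldr (· ∘ ·) id)
        = if i ∈ l then (Dd i)^[s] else id := by
  intro l
  induction l with
  | nil => intro _; simp
  | cons j l IH =>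
    intro hnd
    rw [List.nodup_cons] at hnd
    rw [List.map_cons, List.foldr_cons, IH hnd.2]
    rcases eq_or_ne i j with rfl | hij
    · rw [if_neg (fun hc => hnd.1 hc), if_pos List.mem_cons_self, Pi.single_eq_same]
      rfl
    · rw [Pi.single_eq_of_ne (Ne.symm hij)]
      have : i ∈ j :: l ↔ i ∈ l := by
        simp [List.mem_cons, hij]
      rw [if_congr this rfl rfl]
      rfl

lemma pderivM_single {n : ℕ} (i : Fin n) (s : ℕ) :
    pderivM (Pi.single i s) = (Dd i)^[s] := by
  rw [pderivM, List.ofFn_eq_map, foldr_aux i s (List.finRange n) (List.nodup_finRange n),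
    if_pos (List.mem_finRange i)]

instance betaFinite (n s : ℕ) : Finite {β : Fin n → ℕ // ∑ i, β i = s} := by
  apply Finite.of_injective (fun β => (fun i => (⟨β.1 i, by
    have : β.1 i ≤ s :=
      le_trans (Finset.single_le_sum (fun j _ => Nat.zero_le _) (Finset.mem_univ i))
        (le_of_eq β.2)
    omega⟩ : Fin (s+1))))
  intro β γ hβγ
  apply Subtype.ext
  funext i
  have := congrFun hβγ i
  simpa using congrArg Fin.val this

lemma iter_cont {n : ℕ} (i : Fin n) :
    ∀ (k : ℕ) (h : (Fin n → ℝ) → ℂ), ContDiff ℝ ((k:ℕ):ℕ∞) h → Continuous ((Dd i)^[k] h) := by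
  intro k
  induction k with
  | zero => intro h hC; exact hC.continuous
  | succ k IH =>
    intro h hC
    rw [Function.iterate_succ_apply]
    exact IH (Dd i h) (Dd_contDiff hC i)

/-- the dual pairing map -/
def Wm (α : ℝ) {n : ℕ} (m : Fin n → ℤ) : (Fin n → ℝ) →L[ℝ] ℝ :=
  ∑ j, (((m j : ℝ)) / Real.sin α) • ContinuousLinearMap.proj j

lemma Wm_apply (α : ℝ) {n : ℕ} (m : Fin n → ℤ) (v : Fin n → ℝ) :
    Wm α m v = ∑ j, ((m j : ℝ) / Real.sin α) * v j := by
  simp [Wm, ContinuousLinearMap.sum_apply]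

lemma Wm_single (α : ℝ) {n : ℕ} (m : Fin n → ℤ) (i : Fin n) :
    Wm α m (Pi.single i 1) = (m i : ℝ) / Real.sin α := by
  simp only [Wm, ContinuousLinearMap.sum_apply, ContinuousLinearMap.smul_apply,
    ContinuousLinearMap.proj_apply, smul_eq_mul, Pi.single_apply]
  rw [Finset.sum_eq_single i]
  · simp
  · intro b _ hb; simp [hb]
  · simp

lemma Wm_tendsto (α : ℝ) (hs : Real.sin α ≠ 0) (n : ℕ) :
    Tendsto (fun m : Fin n → ℤ => Wm α m) cofinite (cocompact ((Fin n → ℝ) →L[ℝ] ℝ)) := by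
  rw [Filter.hasBasis_cocompact.tendsto_right_iff]
  intro K hK
  rw [Filter.eventually_cofinite]
  obtain ⟨C, hC⟩ := hK.isBounded.exists_norm_le
  have hsub : {m : Fin n → ℤ | ¬ Wm α m ∉ K} ⊆
      Set.Icc (fun _ => -(⌈C * |Real.sin α|⌉)) (fun _ => ⌈C * |Real.sin α|⌉) := by
    intro m hm
    rw [Set.mem_setOf_eq, not_not] at hm
    have hnorm : ‖Wm α m‖ ≤ C := hC _ hm
    have hbound : ∀ i, |(m i : ℝ)| ≤ C * |Real.sin α| := by
      intro i
      have h1 : |Wm α m (Pi.single i 1)| ≤ ‖Wm α m‖ * ‖(Pi.single i 1 : Fin n → ℝ)‖ :=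
        (Wm α m).le_opNorm _
      have h2 : ‖(Pi.single i 1 : Fin n → ℝ)‖ ≤ 1 := by
        rw [pi_norm_le_iff_of_nonneg zero_le_one]
        intro j
        rcases eq_or_ne j i with rfl | hj
        · simp
        · simp [Pi.single_eq_of_ne hj]
      have h3 : |(m i : ℝ)| / |Real.sin α| ≤ C := by
        rw [← abs_div, ← Wm_single α m i]
        calc |Wm α m (Pi.single i 1)| ≤ ‖Wm α m‖ * ‖(Pi.single i 1 : Fin n → ℝ)‖ := h1
        _ ≤ C * 1 := by
            apply mul_le_mul hnorm h2 (norm_nonneg _) (le_trans (norm_nonneg _) hnorm)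
        _ = C := mul_one C
      calc |(m i : ℝ)| = (|(m i : ℝ)| / |Real.sin α|) * |Real.sin α| := by
            field_simp
      _ ≤ C * |Real.sin α| := by
            apply mul_le_mul_of_nonneg_right h3 (abs_nonneg _)
    rw [Set.mem_Icc]
    constructor <;> (rw [Pi.le_def]; intro i)
    · have := hbound i
      have h4 : (m i : ℝ) ≥ -(C * |Real.sin α|) := by
        have := abs_le.mp this
        linarith [this.1]
      have h5 : ((-⌈C * |Real.sin α|⌉ : ℤ) : ℝ) ≤ (m i : ℝ) := by
        push_cast
        linarith [Int.le_ceil (C * |Real.sin α|)]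
      exact_mod_cast h5
    · have := (abs_le.mp (hbound i)).2
      have h5 : (m i : ℝ) ≤ ((⌈C * |Real.sin α|⌉ : ℤ) : ℝ) :=
        le_trans this (Int.le_ceil _)
      exact_mod_cast h5
  exact Set.Finite.subset (Set.finite_Icc _ _) hsub

lemma coefI_tendsto (α : ℝ) (hs : Real.sin α ≠ 0) {n : ℕ} (h : (Fin n → ℝ) → ℂ)
    (hc : Continuous h) :
    Tendsto (fun m : Fin n → ℤ => coefI α m h) cofinite (nhds 0) := by
  classical
  have RL := tendsto_integral_exp_smul_cocompact ((Tor α n).indicator h) (volume : Measure (Fin n → ℝ))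
  have heq : (fun m : Fin n → ℤ => coefI α m h)
      = (fun w : (Fin n → ℝ) →L[ℝ] ℝ =>
          ∫ v, Real.fourierChar (-w v) • (Tor α n).indicator h v) ∘ (Wm α) := by
    funext m
    simp only [Function.comp_apply]
    have hmeas : MeasurableSet (Tor α n) := by
      rw [Tor_eq_Icc]
      exact measurableSet_Icc
    rw [coefI, ← MeasureTheory.integral_indicator hmeas]
    congr 1
    funext v
    rw [Set.indicator_apply, Set.indicator_apply]
    by_cases hv : v ∈ Tor α n
    · rw [if_pos hv, if_pos hv]
      have hr : 2 * Real.pi * -(Wm α m v)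
          = -(2 * Real.pi * (∑ i, (m i:ℝ) * v i) / Real.sin α) := by
        rw [Wm_apply, show (∑ j, ((m j:ℝ)/Real.sin α) * v j)
            = (∑ j, (m j:ℝ) * v j)/Real.sin α from by
          rw [Finset.sum_div]; exact Finset.sum_congr rfl fun j _ => by ring]
        ring
      have hr2 : (↑(2 * Real.pi * -(Wm α m v)) : ℂ) * Complex.I
          = -(Complex.I * ((2 * Real.pi * (∑ i, (m i:ℝ) * v i) / Real.sin α : ℝ) : ℂ)) := by
        rw [hr]; push_cast; ring
      rw [Circle.smul_def, Real.fourierChar_apply, myE, hr2]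
      exact mul_comm _ _
    · rw [if_neg hv, if_neg hv, smul_zero]
  rw [heq]
  exact RL.comp (Wm_tendsto α hs n)

lemma norm_c (α : ℝ) (z : ℤ) :
    ‖Complex.I * (2 * (Real.pi:ℂ) / (Real.sin α : ℂ)) * (z : ℂ)‖
      = (2 * Real.pi * |Real.sin α|⁻¹) * |(z : ℝ)| := by
  rw [norm_mul, norm_mul, Complex.norm_I, one_mul]
  have h1 : (2 * (Real.pi:ℂ) / (Real.sin α : ℂ)) = ((2 * Real.pi / Real.sin α : ℝ) : ℂ) := by
    push_cast; ring
  have h2 : ((z:ℤ):ℂ) = (((z:ℝ)):ℂ) := by push_cast; rfl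
  rw [h1, Complex.norm_real, h2, Complex.norm_real]
  rw [Real.norm_eq_abs, Real.norm_eq_abs, abs_div,
    abs_of_pos (by positivity : (0:ℝ) < 2 * Real.pi), div_eq_mul_inv]

theorem stmt19 (α : ℝ) (hα : ∀ k : ℤ, α ≠ k * Real.pi) (n : ℕ)
    (f : (Fin n → ℝ) → ℂ) (s : ℕ)
    (hper : Per α fun x => eA α x * f x)
    (hsm : ContDiff ℝ ((s : ℕ) : ℕ∞) fun x => eA α x * f x) :
    (∀ m : Fin n → ℤ, m ≠ 0 →
      ‖Fcoef α f m‖ * Real.sqrt (∑ i, (m i : ℝ) ^ 2) ^ s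
        ≤ (Real.sqrt n / (2 * Real.pi * |Real.sin α|⁻¹)) ^ s *
            ⨆ β : {β : Fin n → ℕ // ∑ i, β i = s},
              ‖Fcoef α (fun x => (eA α x)⁻¹ * pderivM β.1 (fun z => eA α z * f z) x) m‖) ∧
    Tendsto
      (fun m : Fin n → ℤ => ‖Fcoef α f m‖ * (1 + Real.sqrt (∑ i, (m i : ℝ) ^ 2) ^ s))
      cofinite (nhds 0) := by
  classical
  have hsin : Real.sin α ≠ 0 := sin_ne_zero_of α hα
  rcases eq_or_ne n 0 with rfl | hn0
  · constructor
    · intro m hm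
      exact absurd (Subsingleton.elim m 0) hm
    · rw [Filter.cofinite_eq_bot]
      exact tendsto_bot
  obtain ⟨N, rfl⟩ := Nat.exists_eq_succ_of_ne_zero hn0
  have hC0 : (0:ℝ) < 2 * Real.pi * |Real.sin α|⁻¹ := by
    have := Real.pi_pos
    have h2 : (0:ℝ) < |Real.sin α| := abs_pos.2 hsin
    positivity
  have hA : (0:ℝ) ≤ ‖Acoef α‖ ^ (N+1) := pow_nonneg (norm_nonneg _) _
  have key : ∀ m : Fin (N+1) → ℤ, m ≠ 0 → ∀ i : Fin (N+1), (∀ j, |m j| ≤ |m i|) →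
      ‖Fcoef α f m‖ * Real.sqrt (∑ j, (m j : ℝ) ^ 2) ^ s
        ≤ (Real.sqrt ((N+1 : ℕ) : ℝ) / (2 * Real.pi * |Real.sin α|⁻¹)) ^ s *
            ‖Fcoef α (fun x => (eA α x)⁻¹ *
              pderivM (Pi.single i s) (fun z => eA α z * f z) x) m‖ := by
    intro m _hm i hi
    have hsum_sq : (∑ j, (m j:ℝ)^2) ≤ ((N+1 : ℕ) : ℝ) * ((m i : ℝ))^2 := by
      calc ∑ j, (m j:ℝ)^2 ≤ ∑ _j : Fin (N+1), ((m i:ℝ))^2 := by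
            apply Finset.sum_le_sum
            intro j _
            have hji : |(m j : ℝ)| ≤ |(m i : ℝ)| := by exact_mod_cast hi j
            calc (m j:ℝ)^2 = |(m j:ℝ)|^2 := (sq_abs _).symm
              _ ≤ |(m i:ℝ)|^2 := pow_le_pow_left₀ (abs_nonneg _) hji 2
              _ = (m i:ℝ)^2 := sq_abs _
      _ = ((N+1 : ℕ) : ℝ) * (m i:ℝ)^2 := by
            rw [Finset.sum_const, Finset.card_univ, Fintype.card_fin, nsmul_eq_mul]
    have hsqrt : Real.sqrt (∑ j, (m j:ℝ)^2) ≤ Real.sqrt ((N+1:ℕ):ℝ) * |(m i:ℝ)| := by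
      calc Real.sqrt (∑ j, (m j:ℝ)^2) ≤ Real.sqrt (((N+1:ℕ):ℝ) * (m i:ℝ)^2) :=
            Real.sqrt_le_sqrt hsum_sq
        _ = Real.sqrt ((N+1:ℕ):ℝ) * |(m i:ℝ)| := by
            rw [Real.sqrt_mul (Nat.cast_nonneg _), Real.sqrt_sq_eq_abs]
    have hiter := coefI_iter α hsin m i s (fun z => eA α z * f z) hsm hper
    have hDs : ‖coefI α m ((Dd i)^[s] (fun z => eA α z * f z))‖
        = ((2 * Real.pi * |Real.sin α|⁻¹) * |(m i:ℝ)|)^s *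
          ‖coefI α m (fun z => eA α z * f z)‖ := by
      rw [hiter, norm_mul, norm_pow, norm_c]
    rw [norm_Fcoef α f m, pderivM_single,
      norm_Fcoef' α ((Dd i)^[s] (fun z => eA α z * f z)) m, hDs]
    have hre : (Real.sqrt ((N+1:ℕ):ℝ) / (2 * Real.pi * |Real.sin α|⁻¹)) ^ s *
        (‖Acoef α‖ ^ (N+1) *
          (((2 * Real.pi * |Real.sin α|⁻¹) * |(m i:ℝ)|)^s *
            ‖coefI α m (fun z => eA α z * f z)‖))
        = ‖Acoef α‖ ^ (N+1) * ‖coefI α m (fun z => eA α z * f z)‖ *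
            (Real.sqrt ((N+1:ℕ):ℝ) * |(m i:ℝ)|)^s := by
      rw [div_pow, mul_pow, mul_pow]
      field_simp
      ring
    rw [hre]
    apply mul_le_mul_of_nonneg_left (pow_le_pow_left₀ (Real.sqrt_nonneg _) hsqrt s)
    exact mul_nonneg hA (norm_nonneg _)
  constructor
  · intro m hm
    obtain ⟨i, -, hi⟩ := Finset.exists_max_image Finset.univ (fun j => |m j|)
      ⟨0, Finset.mem_univ 0⟩
    have hk := key m hm i (fun j => hi j (Finset.mem_univ j))
    refine le_trans hk ?_
    apply mul_le_mul_of_nonneg_left ?_ (pow_nonneg (by positivity) s)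
    have hbdd : BddAbove (Set.range fun β : {β : Fin (N+1) → ℕ // ∑ i, β i = s} =>
        ‖Fcoef α (fun x => (eA α x)⁻¹ * pderivM β.1 (fun z => eA α z * f z) x) m‖) :=
      (Set.finite_range _).bddAbove
    have hmem : (∑ j, (Pi.single i s : Fin (N+1) → ℕ) j) = s := by
      simp [Pi.single_apply]
    exact le_ciSup hbdd ⟨Pi.single i s, hmem⟩
  · have h1 : Tendsto (fun m : Fin (N+1) → ℤ => ‖Fcoef α f m‖) cofinite (nhds 0) := by
      have h0 := (coefI_tendsto α hsin (fun z => eA α z * f z) hsm.continuous).norm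
      have h2 := h0.const_mul (‖Acoef α‖ ^ (N+1))
      simp only [norm_zero, mul_zero] at h2
      apply h2.congr
      intro m
      rw [norm_Fcoef]
    have hterm : ∀ i : Fin (N+1), Tendsto (fun m : Fin (N+1) → ℤ =>
        ‖coefI α m ((Dd i)^[s] (fun z => eA α z * f z))‖) cofinite (nhds 0) := by
      intro i
      have := (coefI_tendsto α hsin ((Dd i)^[s] (fun z => eA α z * f z))
        (iter_cont i s _ hsm)).norm
      simpa using this
    have hu : Tendsto (fun m : Fin (N+1) → ℤ =>
        (Real.sqrt ((N+1:ℕ):ℝ) / (2 * Real.pi * |Real.sin α|⁻¹)) ^ s *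
          (‖Acoef α‖ ^ (N+1) *
            ∑ i : Fin (N+1), ‖coefI α m ((Dd i)^[s] (fun z => eA α z * f z))‖))
        cofinite (nhds 0) := by
      have hsum := tendsto_finset_sum (f := fun (i : Fin (N+1)) (m : Fin (N+1) → ℤ) =>
        ‖coefI α m ((Dd i)^[s] (fun z => eA α z * f z))‖) (a := fun _ => 0) Finset.univ
        (fun i _ => hterm i)
      simp only [Finset.sum_const_zero] at hsum
      have h3 := (hsum.const_mul (‖Acoef α‖ ^ (N+1))).const_mul
        ((Real.sqrt ((N+1:ℕ):ℝ) / (2 * Real.pi * |Real.sin α|⁻¹)) ^ s)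
      simpa using h3
    have h2 : Tendsto (fun m : Fin (N+1) → ℤ =>
        ‖Fcoef α f m‖ * Real.sqrt (∑ j, (m j : ℝ) ^ 2) ^ s) cofinite (nhds 0) := by
      apply squeeze_zero' (Eventually.of_forall fun m => by positivity) ?_ hu
      filter_upwards [eventually_cofinite_ne (0 : Fin (N+1) → ℤ)] with m hm
      obtain ⟨i, -, hi⟩ := Finset.exists_max_image Finset.univ (fun j => |m j|)
        ⟨0, Finset.mem_univ 0⟩
      refine le_trans (key m hm i (fun j => hi j (Finset.mem_univ j))) ?_
      rw [pderivM_single, norm_Fcoef']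
      apply mul_le_mul_of_nonneg_left ?_ (pow_nonneg (by positivity) s)
      apply mul_le_mul_of_nonneg_left ?_ hA
      exact Finset.single_le_sum
        (f := fun j : Fin (N+1) => ‖coefI α m ((Dd j)^[s] (fun z => eA α z * f z))‖)
        (fun j _ => norm_nonneg _) (Finset.mem_univ i)
    have hfin := h1.add h2
    simp only [add_zero] at hfin
    apply hfin.congr
    intro m
    rw [mul_add, mul_one]
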